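/- Let (X, μ) be a measure space with 0 < μ(X) < ∞, let n ≥ 4 be an integer, and let f : X → ℝ be measurable with exp((n+1)·f) and exp((n-3)·f) integrable. Let C₁, C₂ > 0 be real constants such that C₂·∫_X exp((n+1)f) dμ ≤ C₁·∫_X exp((n-3)f) dμ. Then ∫_X exp((n+1)f) dμ ≤ (C₁/C₂)^{(n+1)/4} · μ(X). -/

import Mathlib

open MeasureTheory

theorem stmt_14 {X : Type*} [MeasurableSpace X] (μ : Measure X)
    (hμ0 : 0 < μ Set.univ) (hμfin : μ Set.univ < ⊤)
    (n : ℕ) (hn : 4 ≤ n) (f : X → ℝ) (hf : Measurable f)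
    (hint1 : Integrable (fun x => Real.exp (((n : ℝ) + 1) * f x)) μ)
    (hint2 : Integrable (fun x => Real.exp (((n : ℝ) - 3) * f x)) μ)
    (C₁ C₂ : ℝ) (hC₁ : 0 < C₁) (hC₂ : 0 < C₂)
    (hle : C₂ * ∫ x, Real.exp (((n : ℝ) + 1) * f x) ∂μ ≤
      C₁ * ∫ x, Real.exp (((n : ℝ) - 3) * f x) ∂μ) :
    ∫ x, Real.exp (((n : ℝ) + 1) * f x) ∂μ ≤
      (C₁ / C₂) ^ (((n : ℝ) + 1) / 4) * (μ Set.univ).toReal := by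
  set I := ∫ x, Real.exp (((n : ℝ) + 1) * f x) ∂μ with hIdef
  set J := ∫ x, Real.exp (((n : ℝ) - 3) * f x) ∂μ with hJdef
  set M := (μ Set.univ).toReal with hMdef
  have hn4 : (4:ℝ) ≤ (n:ℝ) := by exact_mod_cast hn
  have hn3 : (0:ℝ) < (n:ℝ) - 3 := by linarith
  have hn1 : (0:ℝ) < (n:ℝ) + 1 := by linarith
  set p : ℝ := ((n:ℝ)+1)/((n:ℝ)-3) with hpdef
  set q : ℝ := ((n:ℝ)+1)/4 with hqdef
  have hp0 : 0 < p := div_pos hn1 hn3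
  have hq0 : 0 < q := by positivity
  have hconj : Real.HolderConjugate p q := by
    rw [Real.holderConjugate_iff]; constructor
    · rw [hpdef, lt_div_iff₀ hn3]; linarith
    · rw [hpdef, hqdef]
      field_simp
      ring
  have hM0 : 0 < M := ENNReal.toReal_pos hμ0.ne' hμfin.ne
  have hI0 : 0 < I := by
    refine (integral_pos_iff_support_of_nonneg (fun x => (Real.exp_pos _).le) hint1).2 ?_
    have : (Function.support fun x => Real.exp (((n : ℝ) + 1) * f x)) = Set.univ := by
      ext x; simp [Function.support, Real.exp_ne_zero]
    rw [this]; exact hμ0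
  have hJnn : 0 ≤ J := integral_nonneg fun x => (Real.exp_pos _).le
  -- Hölder's inequality
  have key := ENNReal.lintegral_mul_le_Lp_mul_Lq μ hconj
    (f := fun x => ENNReal.ofReal (Real.exp (((n:ℝ)-3) * f x))) (g := fun _ => 1)
    ((ENNReal.measurable_ofReal.comp ((Real.measurable_exp).comp ((measurable_const).mul hf))).aemeasurable)
    aemeasurable_const
  have e1 : (∫⁻ x, (ENNReal.ofReal (Real.exp (((n:ℝ)-3) * f x)))^p ∂μ)
      = ENNReal.ofReal I := by
    rw [ofReal_integral_eq_lintegral_ofReal hint1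
      (Filter.Eventually.of_forall fun x => (Real.exp_pos _).le)]
    congr 1
    ext x
    rw [ENNReal.ofReal_rpow_of_pos (Real.exp_pos _), ← Real.exp_mul]
    congr 1
    rw [hpdef]
    field_simp
  have e2 : (∫⁻ x, (ENNReal.ofReal (Real.exp (((n:ℝ)-3) * f x))) * 1 ∂μ)
      = ENNReal.ofReal J := by
    simp only [mul_one]
    rw [ofReal_integral_eq_lintegral_ofReal hint2
      (Filter.Eventually.of_forall fun x => (Real.exp_pos _).le)]
  have e3 : (∫⁻ (_ : X), (1:ENNReal)^q ∂μ) = ENNReal.ofReal M := by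
    simp [hMdef, ENNReal.one_rpow, ENNReal.ofReal_toReal hμfin.ne]
  simp only [Pi.mul_apply] at key
  rw [e2, e1, e3] at key
  have holder : J ≤ I ^ (1/p) * M ^ (1/q) := by
    have h1 : (ENNReal.ofReal I) ^ (1/p) = ENNReal.ofReal (I ^ (1/p)) :=
      ENNReal.ofReal_rpow_of_pos hI0
    have h2 : (ENNReal.ofReal M) ^ (1/q) = ENNReal.ofReal (M ^ (1/q)) :=
      ENNReal.ofReal_rpow_of_pos hM0
    rw [h1, h2, ← ENNReal.ofReal_mul (by positivity)] at key
    exact (ENNReal.ofReal_le_ofReal_iff (by positivity)).1 key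
  -- combine
  have hD : 0 < C₁ / C₂ := div_pos hC₁ hC₂
  have step : I ≤ (C₁/C₂) * (I ^ (1/p) * M ^ (1/q)) := by
    have h := hle.trans (mul_le_mul_of_nonneg_left holder hC₁.le)
    rw [div_mul_eq_mul_div, le_div_iff₀ hC₂, mul_comm I C₂]
    exact h
  have hIsplit : I = I ^ (1/p) * I ^ (1/q) := by
    rw [← Real.rpow_add hI0, one_div, one_div, hconj.inv_add_inv_eq_one, Real.rpow_one]
  have hIp : 0 < I ^ (1/p) := Real.rpow_pos_of_pos hI0 _
  have step2 : I ^ (1/q) ≤ (C₁/C₂) * M ^ (1/q) := by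
    have : I ^ (1/p) * I ^ (1/q) ≤ I ^ (1/p) * ((C₁/C₂) * M ^ (1/q)) := by
      rw [← hIsplit]
      calc I ≤ (C₁/C₂) * (I ^ (1/p) * M ^ (1/q)) := step
        _ = I ^ (1/p) * ((C₁/C₂) * M ^ (1/q)) := by ring
    exact le_of_mul_le_mul_left this hIp
  have final := Real.rpow_le_rpow (by positivity) step2 hq0.le
  rw [← Real.rpow_mul hI0.le, one_div_mul_cancel hq0.ne', Real.rpow_one,
    Real.mul_rpow hD.le (by positivity), ← Real.rpow_mul hM0.le,
    one_div_mul_cancel hq0.ne', Real.rpow_one] at final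
  exact final
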